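/- arXiv:2010.05663 — 6 statements merged into one kernel-verified Lean document; each statement's English description precedes it below -/
import Mathlib

section
/- Let r > 0, let 0 < η < Y < r, and let α, β ∈ (0,1) satisfy β·((1−α)/(α+β))² > Y/η. Set Λ(r) := (1 + 4βη/((α+β)²r)) / (1 + 4Y/((1−α)²r)) (this hypothesis guarantees Λ(r) > 1). Let f be analytic on an open set containing the closed semi-disc D_r := {z ∈ ℂ : |z| ≤ r, Im z ≥ 0}, and suppose f(iβr) ≠ 0. Then the set of zeros of f in the region D_{αr,η,Y} := {z ∈ ℂ : η ≤ Im z ≤ Y, |z| ≤ αr} is finite and its cardinality is at most (2/log Λ(r)) · log( (1/min{β, 1−β}) · sup_{z ∈ ∂D_r}|f(z)| / |f(iβr)| ), where ∂D_r = {z : |z| = r, Im z ≥ 0} ∪ [−r, r] is the boundary of the semi-disc. -/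
set_option maxHeartbeats 2000000

open Complex Set Filter Topology

lemma factor_once {V : Set ℂ} (hV : IsOpen V) {f : ℂ → ℂ} (hf : AnalyticOnNhd ℂ f V)
    {w : ℂ} (hw : w ∈ V) (hfw : f w = 0) :
    ∃ g : ℂ → ℂ, AnalyticOnNhd ℂ g V ∧ ∀ z, f z = (z - w) * g z := by
  refine ⟨dslope f w, ?_, ?_⟩
  · intro z hz
    rcases eq_or_ne z w with rfl | hzw
    · rcases hf z hz with ⟨p, hp⟩
      exact hp.has_fpower_series_dslope_fslope.analyticAt
    · have h1 : AnalyticAt ℂ (fun y => (y - w)⁻¹ * (f y - f w)) z := by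
        exact ((analyticAt_id.sub analyticAt_const).inv (sub_ne_zero.2 hzw)).mul
          ((hf z hz).sub analyticAt_const)
      refine h1.congr ?_
      filter_upwards [isOpen_ne.mem_nhds hzw] with y hy
      rw [dslope_of_ne f hy, slope_def_field]
      field_simp
  · intro z
    have h := sub_smul_dslope f w z
    rw [hfw, sub_zero, smul_eq_mul] at h
    exact h.symm

lemma factor_finset {V : Set ℂ} (hV : IsOpen V) (T : Finset ℂ) :
    ∀ {f : ℂ → ℂ}, AnalyticOnNhd ℂ f V → (∀ w ∈ T, w ∈ V ∧ f w = 0) →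
    ∃ g : ℂ → ℂ, AnalyticOnNhd ℂ g V ∧ ∀ z, f z = (∏ w ∈ T, (z - w)) * g z := by
  classical
  induction T using Finset.induction_on with
  | empty => intro f hf _; exact ⟨f, hf, by simp⟩
  | @insert w T hwT ih =>
    intro f hf hT
    obtain ⟨g1, hg1, hrep1⟩ := factor_once hV hf (hT w (Finset.mem_insert_self w T)).1
      (hT w (Finset.mem_insert_self w T)).2
    have hT1 : ∀ w' ∈ T, w' ∈ V ∧ g1 w' = 0 := by
      intro w' hw'
      have hw'V := (hT w' (Finset.mem_insert_of_mem hw')).1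
      have hfw' := (hT w' (Finset.mem_insert_of_mem hw')).2
      have hne : w' - w ≠ 0 := sub_ne_zero.2 (by rintro rfl; exact hwT hw')
      refine ⟨hw'V, ?_⟩
      have := hrep1 w'
      rw [hfw'] at this
      exact (mul_eq_zero.1 this.symm).resolve_left hne
    obtain ⟨g, hg, hrep⟩ := ih hg1 hT1
    refine ⟨g, hg, fun z => ?_⟩
    rw [hrep1 z, hrep z, Finset.prod_insert hwT]
    ring

lemma center_real (r η Y α β x y : ℝ)
    (hr : 0 < r) (hη : 0 < η) (hy1 : η ≤ y) (hyY : y ≤ Y) (hYr : Y < r)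
    (hα0 : 0 < α) (hα1 : α < 1) (hβ0 : 0 < β) (hβ1 : β < 1)
    (hxy : x^2 + y^2 ≤ (α*r)^2) :
    (1 + 4*β*η/((α+β)^2*r)) * ((x^2 + (β*r - y)^2) * ((β*r*y + r^2)^2 + (β*r*x)^2))
      ≤ (1 + 4*Y/((1-α)^2*r)) * ((x^2 + (β*r + y)^2) * ((β*r*y - r^2)^2 + (β*r*x)^2)) := by
  have hy0 : 0 < y := lt_of_lt_of_le hη hy1
  have har : 0 < α*r := mul_pos hα0 hr
  have hyar : y ≤ α*r := by nlinarith [sq_nonneg x]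
  have hApos : 0 ≤ 4*β*η/((α+β)^2*r) := by positivity
  have h1α : (0:ℝ) < 1 - α := by linarith
  have hY0 : (0:ℝ) < Y := lt_of_lt_of_le hy0 hyY
  have hBpos : 0 ≤ 4*Y/((1-α)^2*r) := div_nonneg (by linarith) (by positivity)
  have hαβ : (0:ℝ) < α + β := by linarith
  have hIa : (1 + 4*β*η/((α+β)^2*r)) * (x^2 + (β*r - y)^2) ≤ x^2 + (β*r + y)^2 := by
    have h1 : x^2 + (β*r - y)^2 ≤ (α+β)^2*r^2 := by
      nlinarith [mul_nonneg (mul_nonneg hβ0.le hr.le) (add_nonneg har.le hy0.le)]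
    have hA4 : (4*β*η/((α+β)^2*r)) * ((α+β)^2*r^2) = 4*β*η*r := by
      field_simp
    have h2 : (4*β*η/((α+β)^2*r)) * (x^2 + (β*r - y)^2) ≤ 4*β*η*r := by
      rw [← hA4]; exact mul_le_mul_of_nonneg_left h1 hApos
    nlinarith [mul_nonneg (sub_nonneg.2 hy1) (mul_pos hβ0 hr).le]
  have hIb : (β*r*y + r^2)^2 + (β*r*x)^2
      ≤ (1 + 4*Y/((1-α)^2*r)) * ((β*r*y - r^2)^2 + (β*r*x)^2) := by
    have hbyr : β*r*y ≤ α*r^2 := by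
      nlinarith [mul_le_mul_of_nonneg_left hyar hr.le,
        mul_nonneg (mul_nonneg (sub_nonneg.2 hβ1.le) hr.le) hy0.le]
    have h1b : (1-α)*r^2 ≤ r^2 - β*r*y := by nlinarith
    have h1c : (0:ℝ) ≤ (1-α)*r^2 := by positivity
    have h1 : (1-α)^2*r^4 ≤ (β*r*y - r^2)^2 := by
      calc (1-α)^2*r^4 = ((1-α)*r^2)^2 := by ring
        _ ≤ (r^2 - β*r*y)^2 := pow_le_pow_left₀ h1c h1b 2
        _ = (β*r*y - r^2)^2 := by ring
    have hB4 : (4*Y/((1-α)^2*r)) * ((1-α)^2*r^4) = 4*Y*r^3 := by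
      field_simp
    have h2 : 4*Y*r^3 ≤ (4*Y/((1-α)^2*r)) * ((β*r*y - r^2)^2 + (β*r*x)^2) := by
      have h3 := mul_le_mul_of_nonneg_left h1 hBpos
      nlinarith [mul_nonneg hBpos (sq_nonneg (β*r*x))]
    have hby : β*y ≤ Y := by nlinarith [mul_nonneg (sub_nonneg.2 hβ1.le) hy0.le]
    have h4 : 4*(β*y)*r^3 ≤ 4*Y*r^3 := by
      have : (0:ℝ) ≤ 4*r^3 := by positivity
      nlinarith
    nlinarith
  have hP2 : (0:ℝ) ≤ (β*r*y + r^2)^2 + (β*r*x)^2 := by positivity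
  have hQ1 : (0:ℝ) ≤ x^2 + (β*r + y)^2 := by positivity
  calc (1 + 4*β*η/((α+β)^2*r)) * ((x^2 + (β*r - y)^2) * ((β*r*y + r^2)^2 + (β*r*x)^2))
      = ((1 + 4*β*η/((α+β)^2*r)) * (x^2 + (β*r - y)^2)) * ((β*r*y + r^2)^2 + (β*r*x)^2) := by
        ring
    _ ≤ (x^2 + (β*r + y)^2) * ((1 + 4*Y/((1-α)^2*r)) * ((β*r*y - r^2)^2 + (β*r*x)^2)) :=
        mul_le_mul hIa hIb hP2 hQ1
    _ = (1 + 4*Y/((1-α)^2*r)) * ((x^2 + (β*r + y)^2) * ((β*r*y - r^2)^2 + (β*r*x)^2)) := by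
        ring

lemma boundary_abs {r : ℝ} (hr : 0 < r) {w z : ℂ} (hw0 : w ≠ 0)
    (hz : z.im = 0 ∨ ‖z‖ = r) :
    ‖(z - w) * (z - (r:ℂ)^2/w)‖ =
      ‖(z - (starRingEnd ℂ) w) * (z - (r:ℂ)^2/(starRingEnd ℂ) w)‖ := by
  have hw0' : (starRingEnd ℂ) w ≠ 0 := by simpa using hw0
  rcases hz with hz | hz
  · have hzc : (starRingEnd ℂ) z = z := Complex.conj_eq_iff_im.mpr hz
    have e : (z - (starRingEnd ℂ) w) * (z - (r:ℂ)^2/(starRingEnd ℂ) w)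
        = (starRingEnd ℂ) ((z - w) * (z - (r:ℂ)^2/w)) := by
      rw [map_mul, map_sub, map_sub, map_div₀, hzc, map_pow, Complex.conj_ofReal]
    rw [e, Complex.norm_conj]
  · have hzz : z * (starRingEnd ℂ) z = ((r:ℂ))^2 := by
      rw [Complex.mul_conj]
      norm_cast
      rw [Complex.normSq_eq_norm_sq, hz]
    have key : ∀ u : ℂ, u ≠ 0 →
        ‖z - (r:ℂ)^2/u‖ = r * ‖z - (starRingEnd ℂ) u‖ / ‖u‖ := by
      intro u hu
      have e : z - (r:ℂ)^2/u = z * (u - (starRingEnd ℂ) z) / u := by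
        field_simp
        rw [← hzz]; ring
      rw [e, norm_div, norm_mul]
      rw [show u - (starRingEnd ℂ) z = (starRingEnd ℂ) ((starRingEnd ℂ) u - z) by
        rw [map_sub]; simp]
      rw [Complex.norm_conj, hz, norm_sub_rev]
    rw [norm_mul, norm_mul, key w hw0, key _ hw0']
    rw [show (starRingEnd ℂ) ((starRingEnd ℂ) w) = w by simp, Complex.norm_conj]
    ring

lemma center_abs (r η Y α β : ℝ)
    (hr : 0 < r) (hη : 0 < η) (hYr : Y < r)
    (hα0 : 0 < α) (hα1 : α < 1) (hβ0 : 0 < β) (hβ1 : β < 1)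
    (w : ℂ) (hw1 : η ≤ w.im) (hw2 : w.im ≤ Y) (hw3 : ‖w‖ ≤ α*r) :
    ((1 + 4*β*η/((α+β)^2*r)) / (1 + 4*Y/((1-α)^2*r))) *
      ‖(Complex.I*β*r - w) * (Complex.I*β*r - (r:ℂ)^2/w)‖^2
    ≤ ‖(Complex.I*β*r - (starRingEnd ℂ) w) *
        (Complex.I*β*r - (r:ℂ)^2/(starRingEnd ℂ) w)‖^2 := by
  have hw0 : w ≠ 0 := by
    intro h; rw [h] at hw1; simp at hw1; linarith
  have hw0' : (starRingEnd ℂ) w ≠ 0 := by simpa using hw0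
  have hY0 : (0:ℝ) < Y := lt_of_lt_of_le (lt_of_lt_of_le hη hw1) hw2
  have h1B : (0:ℝ) < 1 + 4*Y/((1-α)^2*r) := by
    have : (0:ℝ) < (1-α)^2*r := by
      have : (0:ℝ) < 1 - α := by linarith
      positivity
    have := div_pos (by linarith : (0:ℝ) < 4*Y) this
    linarith
  have hnw : 0 < Complex.normSq w := Complex.normSq_pos.2 hw0
  set c : ℂ := Complex.I*β*r with hc
  have e1 : ‖(c - w) * (c - (r:ℂ)^2/w)‖^2 * Complex.normSq w
      = Complex.normSq (c - w) * Complex.normSq (c*w - (r:ℂ)^2) := by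
    rw [Complex.sq_norm, ← Complex.normSq_mul, ← Complex.normSq_mul]
    congr 1
    field_simp
  have e2 : ‖(c - (starRingEnd ℂ) w) * (c - (r:ℂ)^2/(starRingEnd ℂ) w)‖^2
        * Complex.normSq w
      = Complex.normSq (c - (starRingEnd ℂ) w)
        * Complex.normSq (c*(starRingEnd ℂ) w - (r:ℂ)^2) := by
    rw [Complex.sq_norm, ← Complex.normSq_conj w, ← Complex.normSq_mul, ← Complex.normSq_mul]
    congr 1
    field_simp
  have e3 : Complex.normSq (c - w) = w.re^2 + (β*r - w.im)^2 := by
    simp [Complex.normSq_apply, hc]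
    ring
  have e4 : Complex.normSq (c*w - (r:ℂ)^2) = (β*r*w.im + r^2)^2 + (β*r*w.re)^2 := by
    simp [Complex.normSq_apply, hc, Complex.mul_re, Complex.mul_im, ← Complex.ofReal_pow]
    ring
  have e5 : Complex.normSq (c - (starRingEnd ℂ) w) = w.re^2 + (β*r + w.im)^2 := by
    simp [Complex.normSq_apply, hc]
    ring
  have e6 : Complex.normSq (c*(starRingEnd ℂ) w - (r:ℂ)^2)
      = (β*r*w.im - r^2)^2 + (β*r*w.re)^2 := by
    simp [Complex.normSq_apply, hc, Complex.mul_re, Complex.mul_im, ← Complex.ofReal_pow]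
    ring
  have hxy : w.re^2 + w.im^2 ≤ (α*r)^2 := by
    have := Complex.sq_norm w
    have h2 : ‖w‖ ^ 2 ≤ (α*r)^2 :=
      pow_le_pow_left₀ (norm_nonneg w) hw3 2
    rw [this] at h2
    rw [Complex.normSq_apply] at h2
    nlinarith
  have key := center_real r η Y α β w.re w.im hr hη hw1 hw2 hYr hα0 hα1 hβ0 hβ1 hxy
  rw [div_mul_eq_mul_div, div_le_iff₀ h1B]
  rw [← mul_le_mul_iff_of_pos_right hnw]
  have L1 : (1 + 4*β*η/((α+β)^2*r)) * ‖(c - w) * (c - (r:ℂ)^2/w)‖^2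
        * Complex.normSq w
      = (1 + 4*β*η/((α+β)^2*r)) * ((w.re^2 + (β*r - w.im)^2)
          * ((β*r*w.im + r^2)^2 + (β*r*w.re)^2)) := by
    rw [mul_assoc, e1, e3, e4]
  have L2 : ‖(c - (starRingEnd ℂ) w) * (c - (r:ℂ)^2/(starRingEnd ℂ) w)‖^2
        * (1 + 4*Y/((1-α)^2*r)) * Complex.normSq w
      = (1 + 4*Y/((1-α)^2*r)) * ((w.re^2 + (β*r + w.im)^2)
          * ((β*r*w.im - r^2)^2 + (β*r*w.re)^2)) := by
    rw [show ‖(c - (starRingEnd ℂ) w) * (c - (r:ℂ)^2/(starRingEnd ℂ) w)‖^2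
        * (1 + 4*Y/((1-α)^2*r)) * Complex.normSq w
      = (1 + 4*Y/((1-α)^2*r)) * (‖(c - (starRingEnd ℂ) w)
          * (c - (r:ℂ)^2/(starRingEnd ℂ) w)‖^2 * Complex.normSq w) from by ring, e2, e5, e6]
  linarith [key]

/-- Proposition 3.8: zero-counting bound for an analytic function on the closed
semi-disc `D_r = {|z| ≤ r, Im z ≥ 0}`. If `0 < η < Y < r`, `α, β ∈ (0,1)` satisfy
`β ((1-α)/(α+β))² > Y/η`, and `f` is analytic on an open neighbourhood of `D_r` with
`f(iβr) ≠ 0`, then the number of zeros of `f` in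
`D_{αr,η,Y} = {η ≤ Im z ≤ Y, |z| ≤ αr}` is at most
`(2 / log Λ(r)) · log( (1/min{β,1-β}) · sup_{∂D_r}|f| / |f(iβr)| )` where
`Λ(r) = (1 + 4βη/((α+β)²r)) / (1 + 4Y/((1-α)²r))`. -/
theorem zero_counting_semidisc
    (r η Y α β : ℝ) (hr : 0 < r) (hη : 0 < η) (hηY : η < Y) (hYr : Y < r)
    (hα : α ∈ Set.Ioo (0:ℝ) 1) (hβ : β ∈ Set.Ioo (0:ℝ) 1)
    (hcond : Y / η < β * ((1 - α) / (α + β)) ^ 2)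
    (f : ℂ → ℂ) (U : Set ℂ) (hU : IsOpen U)
    (hDU : {z : ℂ | ‖z‖ ≤ r ∧ 0 ≤ z.im} ⊆ U)
    (hf : AnalyticOnNhd ℂ f U)
    (hf0 : f (Complex.I * β * r) ≠ 0) :
    {z : ℂ | (η ≤ z.im ∧ z.im ≤ Y ∧ ‖z‖ ≤ α * r) ∧ f z = 0}.Finite ∧
    ({z : ℂ | (η ≤ z.im ∧ z.im ≤ Y ∧ ‖z‖ ≤ α * r) ∧ f z = 0}.ncard : ℝ) ≤
      (2 / Real.log ((1 + 4 * β * η / ((α + β) ^ 2 * r)) / (1 + 4 * Y / ((1 - α) ^ 2 * r)))) *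
        Real.log ((1 / min β (1 - β)) *
          (sSup ((fun z => ‖f z‖) ''
            ({z : ℂ | ‖z‖ = r ∧ 0 ≤ z.im} ∪ {z : ℂ | z.im = 0 ∧ |z.re| ≤ r})) /
            ‖f (Complex.I * β * r)‖)) := by
  classical
  obtain ⟨hα0, hα1⟩ := hα
  obtain ⟨hβ0, hβ1⟩ := hβ
  have hY0 : (0:ℝ) < Y := lt_trans hη hηY
  have hβr : 0 < β * r := mul_pos hβ0 hr
  have hαr : α * r < r := by nlinarith
  set c : ℂ := Complex.I * ↑β * ↑r with hcdef
  have hcre : c.re = 0 := by simp [hcdef]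
  have hcim : c.im = β * r := by simp [hcdef]
  have hcabs : ‖c‖ = β * r := by
    rw [hcdef, norm_mul, norm_mul]
    simp [ abs_of_pos hβ0, abs_of_pos hr]
  set Sd : Set ℂ := {z : ℂ | ‖z‖ ≤ r ∧ 0 ≤ z.im} with hSddef
  have hSdclosed : IsClosed Sd := by
    apply IsClosed.inter
    · exact isClosed_le continuous_norm continuous_const
    · exact isClosed_le continuous_const Complex.continuous_im
  have hcS : c ∈ Sd := by
    refine ⟨by rw [hcabs]; nlinarith, by rw [hcim]; positivity⟩
  have hcU : c ∈ U := hDU hcS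
  -- the zero set
  set Z : Set ℂ := {z : ℂ | (η ≤ z.im ∧ z.im ≤ Y ∧ ‖z‖ ≤ α * r) ∧ f z = 0} with hZdef
  set K : Set ℂ := {z : ℂ | η ≤ z.im ∧ z.im ≤ Y ∧ ‖z‖ ≤ α * r} with hKdef
  have hKS : K ⊆ Sd := by
    intro z hz
    exact ⟨le_trans hz.2.2 hαr.le, le_trans hη.le hz.1⟩
  have hKc : IsCompact K := by
    have hclosed : IsClosed K := by
      have : K = {z : ℂ | η ≤ z.im} ∩ ({z : ℂ | z.im ≤ Y} ∩ {z : ℂ | ‖z‖ ≤ α * r}) := by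
        ext z; simp [hKdef, and_assoc]
      rw [this]
      exact (isClosed_le continuous_const Complex.continuous_im).inter
        ((isClosed_le Complex.continuous_im continuous_const).inter
          (isClosed_le continuous_norm continuous_const))
    have hbdd : Bornology.IsBounded K := by
      apply (Metric.isBounded_closedBall (x := (0:ℂ)) (r := α * r)).subset
      intro z hz
      rw [Metric.mem_closedBall, dist_zero_right]
      exact hz.2.2
    exact Metric.isCompact_of_isClosed_isBounded hclosed hbdd
  -- connected component
  have hSconv : Convex ℝ Sd := by
    have : Sd = Metric.closedBall (0:ℂ) r ∩ {z : ℂ | 0 ≤ z.im} := by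
      ext z
      simp [hSddef, Metric.mem_closedBall, dist_zero_right]
    rw [this]
    exact (convex_closedBall _ _).inter (convex_halfSpace_im_ge 0)
  set V' : Set ℂ := connectedComponentIn U c with hV'def
  have hV'open : IsOpen V' := hU.connectedComponentIn
  have hSV' : Sd ⊆ V' := hSconv.isPreconnected.subset_connectedComponentIn hcS hDU
  have hfV' : AnalyticOnNhd ℂ f V' := hf.mono (connectedComponentIn_subset U c)
  -- finiteness
  have hfin : Z.Finite := by
    by_contra hinf
    have hZK : Z ⊆ K := fun z hz => hz.1
    obtain ⟨x, hxK, hacc⟩ :=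
      (show Z.Infinite from hinf).exists_accPt_of_subset_isCompact hKc hZK
    have hxV' : x ∈ V' := hSV' (hKS hxK)
    have hfreq : ∃ᶠ z in 𝓝[≠] x, f z = 0 := by
      rw [accPt_iff_frequently] at hacc
      rw [frequently_nhdsWithin_iff]
      exact hacc.mono (fun y hy => ⟨hy.2.2, hy.1⟩)
    have hev : ∀ᶠ z in 𝓝 x, f z = 0 :=
      (hfV' x hxV').frequently_zero_iff_eventually_zero.1 hfreq
    have hEq := hfV'.eqOn_zero_of_preconnected_of_eventuallyEq_zero
      isPreconnected_connectedComponentIn hxV' hev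
    exact hf0 (hEq (mem_connectedComponentIn hcU))
  refine ⟨hfin, ?_⟩
  -- the finset of zeros
  set F : Finset ℂ := hfin.toFinset with hFdef
  have hFmem : ∀ w : ℂ, w ∈ F ↔ w ∈ Z := fun w => hfin.mem_toFinset
  have hwprop : ∀ w ∈ F, η ≤ w.im ∧ w.im ≤ Y ∧ ‖w‖ ≤ α * r ∧ f w = 0 := by
    intro w hw
    obtain ⟨⟨h1, h2, h3⟩, h4⟩ := (hFmem w).1 hw
    exact ⟨h1, h2, h3, h4⟩
  have hwne : ∀ w ∈ F, w ≠ 0 := by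
    intro w hw h0
    have := (hwprop w hw).1
    rw [h0] at this
    simp at this
    linarith
  -- the enlarged open set W and V
  set W : Set ℂ := {z : ℂ | -η < z.im} ∩ Metric.ball (0:ℂ) (r/α) with hWdef
  have hWopen : IsOpen W :=
    (isOpen_lt continuous_const Complex.continuous_im).inter Metric.isOpen_ball
  have hrra : r < r / α := by
    rw [lt_div_iff₀ hα0]; nlinarith
  have hSW : Sd ⊆ W := by
    intro z hz
    constructor
    · exact lt_of_lt_of_le (neg_lt_zero.2 hη) hz.2
    · rw [Metric.mem_ball, dist_zero_right]
      exact lt_of_le_of_lt hz.1 hrra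
  set V : Set ℂ := U ∩ W with hVdef
  have hVopen : IsOpen V := hU.inter hWopen
  have hSV : Sd ⊆ V := fun z hz => ⟨hDU hz, hSW hz⟩
  have hfVan : AnalyticOnNhd ℂ f V := hf.mono inter_subset_left
  -- key nonvanishing facts
  have hrefl_ne : ∀ w ∈ F, ∀ z ∈ W, z - (r:ℂ)^2/w ≠ 0 := by
    intro w hw z hz hzero
    have hzw : z = (r:ℂ)^2/w := by linear_combination hzero
    have habs : ‖z‖ = r^2 / ‖w‖ := by
      rw [hzw, norm_div, norm_pow, Complex.norm_real, Real.norm_eq_abs, abs_of_pos hr]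
    have hw3 : ‖w‖ ≤ α * r := (hwprop w hw).2.2.1
    have hwpos : 0 < ‖w‖ := norm_pos_iff.mpr (hwne w hw)
    have h1 : r / α ≤ r^2 / ‖w‖ := by
      rw [div_le_div_iff₀ hα0 hwpos]
      nlinarith
    have h2 : ‖z‖ < r / α := by
      have := hz.2
      rwa [Metric.mem_ball, dist_zero_right] at this
    rw [habs] at h2
    linarith
  -- factor out zeros
  have hTprop : ∀ w ∈ F, w ∈ V ∧ f w = 0 := by
    intro w hw
    refine ⟨hSV (hKS ?_), (hwprop w hw).2.2.2⟩
    obtain ⟨h1, h2, h3, _⟩ := hwprop w hw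
    exact ⟨h1, h2, h3⟩
  obtain ⟨g, hg, hrep⟩ := factor_finset hVopen F hfVan hTprop
  -- the comparison function h
  set h : ℂ → ℂ := fun z => g z * ∏ w ∈ F,
      ((z - (starRingEnd ℂ) w) * (z - (r:ℂ)^2/(starRingEnd ℂ) w) / (z - (r:ℂ)^2/w)) with hhdef
  have hhan : AnalyticOnNhd ℂ h V := by
    apply hg.mul
    convert Finset.analyticOnNhd_prod (𝕜 := ℂ) (f := fun w z =>
      (z - (starRingEnd ℂ) w) * (z - (r:ℂ)^2/(starRingEnd ℂ) w) / (z - (r:ℂ)^2/w)) F ?_ using 1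
    · funext z; rw [Finset.prod_apply]
    intro w hw
    apply AnalyticOnNhd.div
    · exact ((analyticOnNhd_id.sub analyticOnNhd_const).mul
        (analyticOnNhd_id.sub analyticOnNhd_const))
    · exact (analyticOnNhd_id.sub analyticOnNhd_const)
    · intro z hz
      exact hrefl_ne w hw z hz.2
  -- the fundamental identity on V
  have hid : ∀ z ∈ V, h z * ∏ w ∈ F, ((z - w) * (z - (r:ℂ)^2/w))
      = f z * ∏ w ∈ F, ((z - (starRingEnd ℂ) w) * (z - (r:ℂ)^2/(starRingEnd ℂ) w)) := by
    intro z hz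
    rw [hrep z, hhdef]
    simp only
    rw [mul_assoc, ← Finset.prod_mul_distrib]
    have : ∀ w ∈ F, (z - (starRingEnd ℂ) w) * (z - (r:ℂ)^2/(starRingEnd ℂ) w) / (z - (r:ℂ)^2/w)
        * ((z - w) * (z - (r:ℂ)^2/w))
        = (z - w) * ((z - (starRingEnd ℂ) w) * (z - (r:ℂ)^2/(starRingEnd ℂ) w)) := by
      intro w hw
      have hne := hrefl_ne w hw z hz.2
      field_simp
    rw [Finset.prod_congr rfl this, Finset.prod_mul_distrib]
    ring
  -- boundary set and sup
  set Bd : Set ℂ := {z : ℂ | ‖z‖ = r ∧ 0 ≤ z.im} ∪ {z : ℂ | z.im = 0 ∧ |z.re| ≤ r}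
    with hBddef
  have hBdS : Bd ⊆ Sd := by
    intro z hz
    rcases hz with hz | hz
    · exact ⟨hz.1.le, hz.2⟩
    · have hz2 : ‖z‖ = |z.re| := by
        have hze : z = (z.re : ℂ) := Complex.ext rfl (by simp [hz.1])
        calc ‖z‖ = ‖((z.re : ℝ) : ℂ)‖ := by rw [← hze]
          _ = |z.re| := by rw [Complex.norm_real, Real.norm_eq_abs]
      exact ⟨by rw [hz2]; exact hz.2, le_of_eq hz.1.symm⟩
  have hBdclosed : IsClosed Bd := by
    apply IsClosed.union
    · exact (isClosed_eq continuous_norm continuous_const).inter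
        (isClosed_le continuous_const Complex.continuous_im)
    · exact (isClosed_eq Complex.continuous_im continuous_const).inter
        (isClosed_le (continuous_abs.comp Complex.continuous_re) continuous_const)
  have hBdbdd : Bornology.IsBounded Bd := by
    apply (Metric.isBounded_closedBall (x := (0:ℂ)) (r := r)).subset
    intro z hz
    rw [Metric.mem_closedBall, dist_zero_right]
    exact (hBdS hz).1
  have hBdcpt : IsCompact Bd := Metric.isCompact_of_isClosed_isBounded hBdclosed hBdbdd
  set M : ℝ := sSup ((fun z => ‖f z‖) '' Bd) with hMdef
  have hbddAbove : BddAbove ((fun z => ‖f z‖) '' Bd) := by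
    apply IsCompact.bddAbove
    apply hBdcpt.image_of_continuousOn
    exact continuous_norm.comp_continuousOn (hf.continuousOn.mono (hBdS.trans hDU))
  have hMle : ∀ z ∈ Bd, ‖f z‖ ≤ M := fun z hz => le_csSup hbddAbove ⟨z, hz, rfl⟩
  -- maximum modulus on the open semidisc
  set D : Set ℂ := Metric.ball (0:ℂ) r ∩ {z : ℂ | 0 < z.im} with hDdef
  have hDopen : IsOpen D :=
    Metric.isOpen_ball.inter (isOpen_lt continuous_const Complex.continuous_im)
  have hDbdd : Bornology.IsBounded D := Metric.isBounded_ball.subset inter_subset_left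
  have hDS : D ⊆ Sd := by
    intro z hz
    constructor
    · rw [← dist_zero_right]
      exact (Metric.mem_ball.1 hz.1).le
    · exact hz.2.le
  have hclosD : closure D ⊆ Sd := closure_minimal hDS hSdclosed
  have hcD : c ∈ D := by
    constructor
    · rw [Metric.mem_ball, dist_zero_right, hcabs]
      nlinarith
    · rw [mem_setOf_eq, hcim]
      positivity
  have hfrontBd : frontier D ⊆ Bd := by
    intro z hz
    have hzS : z ∈ Sd := hclosD (frontier_subset_closure hz)
    have hznD : z ∉ D := by
      rw [hDopen.frontier_eq] at hz
      exact hz.2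
    by_cases him : z.im = 0
    · right
      exact ⟨him, le_trans (Complex.abs_re_le_norm z) hzS.1⟩
    · left
      have him' : 0 < z.im := lt_of_le_of_ne hzS.2 (Ne.symm him)
      refine ⟨?_, hzS.2⟩
      by_contra habs
      apply hznD
      refine ⟨?_, him'⟩
      rw [Metric.mem_ball, dist_zero_right]
      exact lt_of_le_of_ne hzS.1 habs
  have hmax : ∀ φ : ℂ → ℂ, AnalyticOnNhd ℂ φ V →
      (∀ z ∈ frontier D, ‖φ z‖ ≤ M) → ‖φ c‖ ≤ M := by
    intro φ hφ hb
    have hdiff : DifferentiableOn ℂ φ (closure D) :=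
      (hφ.differentiableOn).mono (fun z hz => hSV (hclosD hz))
    have hres := Complex.norm_le_of_forall_mem_frontier_norm_le hDbdd hdiff.diffContOnCl
      (fun z hz => by exact hb z hz) (subset_closure hcD)
    exact hres
  have hfM : ‖f c‖ ≤ M := hmax f hfVan (fun z hz => hMle z (hfrontBd hz))
  have hhM : ‖h c‖ ≤ M := by
    apply hmax h hhan
    intro z hz
    have hzBd := hfrontBd hz
    have hzV : z ∈ V := hSV (hBdS hzBd)
    have hzcase : z.im = 0 ∨ ‖z‖ = r := by
      rcases hzBd with h1 | h1
      · exact Or.inr h1.1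
      · exact Or.inl h1.1
    have e : ‖h z‖ * ∏ w ∈ F, ‖(z - w) * (z - (r:ℂ)^2/w)‖
        = ‖f z‖ * ∏ w ∈ F, ‖(z - (starRingEnd ℂ) w)
            * (z - (r:ℂ)^2/(starRingEnd ℂ) w)‖ := by
      rw [← norm_prod, ← norm_prod, ← norm_mul, ← norm_mul, hid z hzV]
    have eprod : (∏ w ∈ F, ‖(z - w) * (z - (r:ℂ)^2/w)‖)
        = ∏ w ∈ F, ‖(z - (starRingEnd ℂ) w) * (z - (r:ℂ)^2/(starRingEnd ℂ) w)‖ :=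
      Finset.prod_congr rfl (fun w hw => boundary_abs hr (hwne w hw) hzcase)
    rw [← eprod] at e
    have hprodne : (∏ w ∈ F, ‖(z - w) * (z - (r:ℂ)^2/w)‖) ≠ 0 := by
      rw [Finset.prod_ne_zero_iff]
      intro w hw
      apply norm_ne_zero_iff.mpr
      apply mul_ne_zero
      · apply sub_ne_zero.2
        intro hzw
        rcases hzcase with h1 | h1
        · have h2 := (hwprop w hw).1
          rw [hzw] at h1
          rw [h1] at h2
          linarith
        · have h2 := (hwprop w hw).2.2.1
          rw [hzw] at h1
          rw [h1] at h2
          linarith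
      · exact hrefl_ne w hw z hzV.2
    have hzeq : ‖h z‖ = ‖f z‖ := mul_right_cancel₀ hprodne e
    rw [hzeq]
    exact hMle z hzBd
  -- the key constants
  have h1α : (0:ℝ) < 1 - α := by linarith
  have h1B : (0:ℝ) < 1 + 4*Y/((1-α)^2*r) := by
    have h4 : (0:ℝ) ≤ 4*Y/((1-α)^2*r) := div_nonneg (by linarith) (by positivity)
    linarith
  set Λ : ℝ := (1 + 4 * β * η / ((α + β) ^ 2 * r)) / (1 + 4 * Y / ((1 - α) ^ 2 * r)) with hΛdef
  have hΛ1 : 1 < Λ := by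
    rw [hΛdef, lt_div_iff₀ h1B]
    have hαβ : (0:ℝ) < α + β := by linarith
    rw [div_pow, mul_div_assoc'] at hcond
    have key0 : Y * (α+β)^2 < β * (1-α)^2 * η := (div_lt_div_iff₀ hη (by positivity)).1 hcond
    have key : 4*Y/((1-α)^2*r) < 4*β*η/((α+β)^2*r) := by
      rw [div_lt_div_iff₀ (by positivity) (by positivity)]
      nlinarith [mul_lt_mul_of_pos_left key0 (by positivity : (0:ℝ) < 4*r)]
    linarith
  have hΛpos : (0:ℝ) < Λ := lt_trans zero_lt_one hΛ1
  have hcen : ∀ w ∈ F, Real.sqrt Λ * ‖(c - w) * (c - (r:ℂ)^2/w)‖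
      ≤ ‖(c - (starRingEnd ℂ) w) * (c - (r:ℂ)^2/(starRingEnd ℂ) w)‖ := by
    intro w hw
    obtain ⟨hw1, hw2, hw3, _⟩ := hwprop w hw
    have hca := center_abs r η Y α β hr hη hYr hα0 hα1 hβ0 hβ1 w hw1 hw2 hw3
    rw [← hcdef] at hca
    rw [show (1 + 4*β*η/((α+β)^2*r)) / (1 + 4*Y/((1-α)^2*r)) = Λ from by rw [hΛdef]]
      at hca
    have hsq := Real.sqrt_le_sqrt hca
    rwa [Real.sqrt_mul hΛpos.le, Real.sqrt_sq (norm_nonneg _),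
      Real.sqrt_sq (norm_nonneg _)] at hsq
  have hcV : c ∈ V := hSV hcS
  have ec : ‖h c‖ * ∏ w ∈ F, ‖(c - w) * (c - (r:ℂ)^2/w)‖
      = ‖f c‖ * ∏ w ∈ F, ‖(c - (starRingEnd ℂ) w)
          * (c - (r:ℂ)^2/(starRingEnd ℂ) w)‖ := by
    rw [← norm_prod, ← norm_prod, ← norm_mul, ← norm_mul, hid c hcV]
  have hPnpos : 0 < ∏ w ∈ F, ‖(c - w) * (c - (r:ℂ)^2/w)‖ := by
    apply Finset.prod_pos
    intro w hw
    apply norm_pos_iff.mpr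
    apply mul_ne_zero
    · apply sub_ne_zero.2
      intro hcw
      exact hf0 (by rw [hcw]; exact (hwprop w hw).2.2.2)
    · exact hrefl_ne w hw c (hSW hcS)
  have hprodle : (Real.sqrt Λ)^F.card * ∏ w ∈ F, ‖(c - w) * (c - (r:ℂ)^2/w)‖
      ≤ ∏ w ∈ F, ‖(c - (starRingEnd ℂ) w) * (c - (r:ℂ)^2/(starRingEnd ℂ) w)‖ := by
    rw [← Finset.prod_const, ← Finset.prod_mul_distrib]
    exact Finset.prod_le_prod
      (fun w _ => mul_nonneg (Real.sqrt_nonneg _) (norm_nonneg _)) hcen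
  have hkey : ‖f c‖ * (Real.sqrt Λ)^F.card ≤ M := by
    have h1 : ‖f c‖ *
          ((Real.sqrt Λ)^F.card * ∏ w ∈ F, ‖(c - w)*(c - (r:ℂ)^2/w)‖)
        ≤ ‖f c‖ * ∏ w ∈ F, ‖(c - (starRingEnd ℂ) w)
            *(c - (r:ℂ)^2/(starRingEnd ℂ) w)‖ :=
      mul_le_mul_of_nonneg_left hprodle (norm_nonneg _)
    rw [← ec] at h1
    have h2 : ‖h c‖ * ∏ w ∈ F, ‖(c - w)*(c - (r:ℂ)^2/w)‖
        ≤ M * ∏ w ∈ F, ‖(c - w)*(c - (r:ℂ)^2/w)‖ :=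
      mul_le_mul_of_nonneg_right hhM hPnpos.le
    have h3 : (‖f c‖ * (Real.sqrt Λ)^F.card)
          * ∏ w ∈ F, ‖(c - w)*(c - (r:ℂ)^2/w)‖
        ≤ M * ∏ w ∈ F, ‖(c - w)*(c - (r:ℂ)^2/w)‖ := by nlinarith [h1, h2]
    exact le_of_mul_le_mul_right h3 hPnpos
  -- final numeric computation
  have hfc0 : 0 < ‖f c‖ := norm_pos_iff.mpr hf0
  have hspos : 0 < Real.sqrt Λ := Real.sqrt_pos.2 hΛpos
  have hs1 : 1 ≤ Real.sqrt Λ := by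
    rw [show (1:ℝ) = Real.sqrt 1 from Real.sqrt_one.symm]
    exact Real.sqrt_le_sqrt hΛ1.le
  have hM0 : 0 < M := by
    have h4 : (1:ℝ) ≤ (Real.sqrt Λ)^F.card := one_le_pow₀ hs1
    nlinarith
  have hNcast : (Z.ncard : ℝ) = (F.card : ℝ) := by
    rw [Set.ncard_eq_toFinset_card Z hfin]
  have hlog1 : (F.card : ℝ) * (Real.log Λ / 2) ≤ Real.log (M / ‖f c‖) := by
    have hsN : (Real.sqrt Λ)^F.card ≤ M / ‖f c‖ := by
      rw [le_div_iff₀ hfc0]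
      nlinarith [hkey]
    have hlog := Real.log_le_log (pow_pos hspos _) hsN
    rwa [Real.log_pow, Real.log_sqrt hΛpos.le] at hlog
  have hmmin : 0 < min β (1-β) := lt_min hβ0 (by linarith)
  have hmle1 : min β (1-β) ≤ 1 := le_trans (min_le_left _ _) hβ1.le
  have hlogm : 0 ≤ Real.log (1 / min β (1-β)) :=
    Real.log_nonneg ((one_le_div hmmin).2 hmle1)
  have hMfc : 0 < M / ‖f c‖ := div_pos hM0 hfc0
  have hlog2 : Real.log (M / ‖f c‖)
      ≤ Real.log ((1 / min β (1-β)) * (M / ‖f c‖)) := by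
    rw [Real.log_mul (by positivity) hMfc.ne']
    linarith
  have hlogΛ : 0 < Real.log Λ := Real.log_pos hΛ1
  rw [hNcast, div_mul_eq_mul_div, le_div_iff₀ hlogΛ]
  nlinarith [hlog1, hlog2, hlogΛ]
end

section
/- Let γ > 0 and let λ ∈ Γ_γ ∪ [0,∞), where Γ_γ = {λ ∈ ℂ : Re λ > 0, 0 < Im λ < γ}. Then |√λ + √(λ − iγ)| ≤ γ/√|λ − iγ| and |√λ − √(λ − iγ)| ≥ √|λ − iγ|, where √|λ − iγ| on the right-hand sides denotes the nonnegative real square root of the modulus. -/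
open Complex

/-- `w` is the square root of `z` for the branch cut along `[0,∞)`:
`w² = z` and either `Im w > 0`, or `Im w = 0` and `Re w ≥ 0`. -/
def IsBranchSqrt (z w : ℂ) : Prop :=
  w ^ 2 = z ∧ (0 < w.im ∨ (w.im = 0 ∧ 0 ≤ w.re))

/-- Lemma 2.4 (a): if `λ ∈ Γ_γ ∪ [0,∞)` then
`|√λ + √(λ-iγ)| ≤ γ/√|λ-iγ|` and `|√λ - √(λ-iγ)| ≥ √|λ-iγ|`. -/
theorem sqrt_sum_diff_bounds_in_strip
    (γ : ℝ) (hγ : 0 < γ) (lam : ℂ)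
    (hlam : (0 < lam.re ∧ 0 < lam.im ∧ lam.im < γ) ∨ (lam.im = 0 ∧ 0 ≤ lam.re))
    (w w' : ℂ) (hw : IsBranchSqrt lam w) (hw' : IsBranchSqrt (lam - Complex.I * γ) w') :
    ‖w + w'‖ ≤ γ / Real.sqrt (‖lam - Complex.I * γ‖) ∧
    Real.sqrt (‖lam - Complex.I * γ‖) ≤ ‖w - w'‖ := by
  obtain ⟨hw2, hwb⟩ := hw
  obtain ⟨hw'2, hw'b⟩ := hw'
  set μ : ℂ := lam - Complex.I * γ with hμ
  have hμim : μ.im = lam.im - γ := by simp [hμ]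
  have hμre : μ.re = lam.re := by simp [hμ]
  have hμim_neg : μ.im < 0 := by
    rcases hlam with ⟨_, _, h⟩ | ⟨h, _⟩ <;> rw [hμim] <;> linarith
  have hlamre : 0 ≤ lam.re := by rcases hlam with ⟨h, _⟩ | ⟨_, h⟩ <;> linarith
  have h1 : w.re * w.re - w.im * w.im = lam.re := by
    have := congrArg Complex.re hw2
    simpa [pow_two, Complex.mul_re] using this
  have h2 : w.re * w.im + w.im * w.re = lam.im := by
    have := congrArg Complex.im hw2
    simpa [pow_two, Complex.mul_im] using this
  have h3 : w'.re * w'.re - w'.im * w'.im = lam.re := by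
    have := congrArg Complex.re hw'2
    simpa [pow_two, Complex.mul_re, hμre] using this
  have h4 : w'.re * w'.im + w'.im * w'.re = μ.im := by
    have := congrArg Complex.im hw'2
    simpa [pow_two, Complex.mul_im] using this
  have hd : 0 < w'.im := by
    rcases hw'b with h | ⟨h0, _⟩
    · exact h
    · exfalso; rw [h0] at h4; simp at h4; linarith
  have hc : w'.re < 0 := by nlinarith
  have hb : 0 ≤ w.im := by rcases hwb with h | ⟨h, _⟩ <;> linarith
  have ha : 0 ≤ w.re := by
    rcases hlam with ⟨_, him, _⟩ | ⟨him, _⟩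
    · have hbpos : 0 < w.im := by
        rcases hwb with h | ⟨h, _⟩
        · exact h
        · exfalso; rw [h] at h2; simp at h2; linarith
      nlinarith
    · rcases hwb with h | ⟨_, h⟩
      · nlinarith
      · exact h
  have hab : w.im ≤ w.re := by nlinarith
  have hcd : w'.im ≤ -w'.re := by nlinarith
  have hkey : w.re * w'.re + w.im * w'.im ≤ 0 := by nlinarith
  have habs' : ‖w'‖ = Real.sqrt (‖μ‖) := by
    rw [← hw'2, norm_pow, Real.sqrt_sq (norm_nonneg _)]
  have hw'ne : w' ≠ 0 := by
    intro h; rw [h] at hd; simp at hd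
  have hw'pos : 0 < ‖w'‖ := norm_pos_iff.mpr hw'ne
  have hnsq : Complex.normSq w' ≤ Complex.normSq (w - w') := by
    simp only [Complex.normSq_apply, Complex.sub_re, Complex.sub_im]
    nlinarith
  have hdiff : ‖w'‖ ≤ ‖w - w'‖ := by
    rw [Complex.norm_def, Complex.norm_def]
    exact Real.sqrt_le_sqrt hnsq
  have hprod : ‖w + w'‖ * ‖w - w'‖ = γ := by
    rw [← norm_mul]
    have e : (w + w') * (w - w') = Complex.I * γ := by
      have : (w + w') * (w - w') = w ^ 2 - w' ^ 2 := by ring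
      rw [this, hw2, hw'2, hμ]; ring
    rw [e, norm_mul, Complex.norm_I, one_mul, Complex.norm_real, Real.norm_eq_abs, abs_of_pos hγ]
  constructor
  · rw [← habs', le_div_iff₀ hw'pos]
    calc ‖w + w'‖ * ‖w'‖
        ≤ ‖w + w'‖ * ‖w - w'‖ :=
          mul_le_mul_of_nonneg_left hdiff (norm_nonneg _)
      _ = γ := hprod
  · rw [← habs']; exact hdiff
end

section
/- Let γ > 0 and let λ ∈ ℂ \ (Γ_γ ∪ [0,∞)), where Γ_γ = {λ ∈ ℂ : Re λ > 0, 0 < Im λ < γ}. Then |√λ + √(λ − iγ)| ≥ √|λ| and |√λ − √(λ − iγ)| ≤ γ/√|λ|, where √|λ| denotes the nonnegative real square root of the modulus |λ|. -/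
open Complex

lemma sq_le_imp_aux (x y : ℝ) (_hx : 0 ≤ x) (hy : 0 ≤ y) (h : x ^ 2 ≤ y ^ 2) : x ≤ y := by
  nlinarith

set_option maxHeartbeats 2000000 in
/-- Lemma 2.4 (b): if `λ ∈ ℂ \ (Γ_γ ∪ [0,∞))` then
`|√λ + √(λ-iγ)| ≥ √|λ|` and `|√λ - √(λ-iγ)| ≤ γ/√|λ|`. -/
theorem sqrt_sum_diff_bounds_outside_strip
    (γ : ℝ) (hγ : 0 < γ) (lam : ℂ)
    (hlam : ¬ ((0 < lam.re ∧ 0 < lam.im ∧ lam.im < γ) ∨ (lam.im = 0 ∧ 0 ≤ lam.re)))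
    (w w' : ℂ) (hw : IsBranchSqrt lam w) (hw' : IsBranchSqrt (lam - Complex.I * γ) w') :
    Real.sqrt ‖lam‖ ≤ ‖w + w'‖ ∧
    ‖w - w'‖ ≤ γ / Real.sqrt ‖lam‖ := by
  obtain ⟨hw1, hw2⟩ := hw
  obtain ⟨hw'1, hw'2⟩ := hw'
  set a := w.re with ha'
  set b := w.im with hb'
  set c := w'.re with hc'
  set d := w'.im with hd'
  have hre : lam.re = a ^ 2 - b ^ 2 := by
    rw [← hw1]; simp [pow_two, Complex.mul_re]; try ring
  have him : lam.im = 2 * a * b := by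
    rw [← hw1]; simp [pow_two, Complex.mul_im]; try ring
  have hre' : lam.re = c ^ 2 - d ^ 2 := by
    have h := congrArg Complex.re hw'1
    simp [pow_two, Complex.mul_re, Complex.mul_im, Complex.sub_re,
      Complex.I_re, Complex.I_im] at h
    nlinarith [h]
  have him' : lam.im - γ = 2 * c * d := by
    have h := congrArg Complex.im hw'1
    simp [pow_two, Complex.mul_im, Complex.sub_im,
      Complex.I_re, Complex.I_im] at h
    nlinarith [h]
  have hb0 : 0 < b := by
    rcases hw2 with h | ⟨h0, h1⟩
    · exact h
    · exfalso; apply hlam; right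
      constructor
      · rw [him, h0]; ring
      · rw [hre, h0]; nlinarith [sq_nonneg a]
  have hd0 : 0 ≤ d := by
    rcases hw'2 with h | ⟨h, _⟩
    · linarith
    · linarith
  have hlam0 : lam ≠ 0 := by
    intro h; apply hlam; right; simp [h]
  have hkey : 0 ≤ a * c + b * d := by
    rcases eq_or_lt_of_le hd0 with hd | hd
    · -- d = 0
      have hc0 : 0 ≤ c := by
        rcases hw'2 with h | ⟨_, h⟩
        · linarith
        · exact h
      have hγim : lam.im = γ := by nlinarith [him']
      have ha0 : 0 < a := by
        by_contra hcon; push_neg at hcon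
        nlinarith [mul_nonneg (neg_nonneg.mpr hcon) hb0.le]
      nlinarith [mul_nonneg ha0.le hc0, mul_nonneg hb0.le hd0]
    · rcases le_or_gt lam.im 0 with h | h
      · have ha : a ≤ 0 := by
          by_contra hcon; push_neg at hcon
          nlinarith [mul_pos hcon hb0]
        have hc : c ≤ 0 := by
          by_contra hcon; push_neg at hcon
          nlinarith [mul_pos hcon hd]
        nlinarith [mul_nonneg (neg_nonneg.mpr ha) (neg_nonneg.mpr hc), mul_nonneg hb0.le hd0]
      · rcases le_or_gt γ lam.im with h2 | h2
        · have ha : 0 < a := by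
            by_contra hcon; push_neg at hcon
            nlinarith [mul_nonneg (neg_nonneg.mpr hcon) hb0.le]
          have hc : 0 ≤ c := by
            by_contra hcon; push_neg at hcon
            nlinarith [mul_pos (neg_pos.mpr hcon) hd]
          nlinarith [mul_nonneg ha.le hc, mul_nonneg hb0.le hd0]
        · have hre0 : lam.re ≤ 0 := by
            by_contra hcon; push_neg at hcon
            exact hlam (Or.inl ⟨hcon, h, h2⟩)
          have ha : 0 < a := by
            by_contra hcon; push_neg at hcon
            nlinarith [mul_nonneg (neg_nonneg.mpr hcon) hb0.le]
          have hc : c < 0 := by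
            by_contra hcon; push_neg at hcon
            nlinarith [mul_nonneg hcon hd0]
          have hab : a ≤ b := sq_le_imp_aux a b ha.le hb0.le (by linarith)
          have hcd : -c ≤ d := sq_le_imp_aux (-c) d (by linarith) hd0
            (by rw [neg_pow]; simp; linarith)
          have hmul : a * -c ≤ b * d := mul_le_mul hab hcd (by linarith) (by linarith)
          nlinarith [hmul]
  have habsw : Real.sqrt ‖lam‖ = ‖w‖ := by
    rw [← hw1]
    rw [show ‖w ^ 2‖ = ‖w‖ ^ 2 from norm_pow w 2]
    exact Real.sqrt_sq (norm_nonneg w)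
  have hfirst : Real.sqrt ‖lam‖ ≤ ‖w + w'‖ := by
    rw [habsw, Complex.norm_def, Complex.norm_def]
    apply Real.sqrt_le_sqrt
    simp only [Complex.normSq_apply, Complex.add_re, Complex.add_im, ← ha', ← hb', ← hc', ← hd']
    nlinarith [sq_nonneg c, sq_nonneg d]
  refine ⟨hfirst, ?_⟩
  have hprod : (w + w') * (w - w') = Complex.I * γ := by
    have : (w + w') * (w - w') = w ^ 2 - w' ^ 2 := by ring
    rw [this, hw1, hw'1]; ring
  have habs2 : ‖w + w'‖ * ‖w - w'‖ = γ := by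
    rw [← norm_mul, hprod, norm_mul, Complex.norm_I, Complex.norm_real, Real.norm_eq_abs, one_mul,
      abs_of_pos hγ]
  have hpos : 0 < Real.sqrt ‖lam‖ :=
    Real.sqrt_pos.mpr (norm_pos_iff.mpr hlam0)
  have hpos2 : 0 < ‖w + w'‖ := lt_of_lt_of_le hpos hfirst
  have heq : ‖w - w'‖ = γ / ‖w + w'‖ := by
    field_simp [ne_of_gt hpos2] at habs2 ⊢
    linarith [habs2]
  rw [heq]
  gcongr
end

section
/- Let z₀ ∈ ℂ, r > 0, and let f be analytic on an open set containing the closed ball of radius r about z₀, with f(z₀) ≠ 0. Then the set of zeros of f in the closed ball of radius r/2 about z₀ is finite and its cardinality is at most (1/log 2) · log( sup_{|z − z₀| = r} |f(z)| / |f(z₀)| ). -/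
open Complex


lemma aux_dslope (f : ℂ → ℂ) (U : Set ℂ) (hf : AnalyticOnNhd ℂ f U) (a : ℂ)
    (haU : a ∈ U) (ha : f a = 0) :
    AnalyticOnNhd ℂ (dslope f a) U ∧ ∀ z, f z = (z - a) * dslope f a z := by
  constructor
  · intro z hz
    by_cases h : z = a
    · subst h
      obtain ⟨p, hp⟩ := hf z hz
      obtain ⟨rr, hrr⟩ := hp
      exact (HasFPowerSeriesAt.has_fpower_series_dslope_fslope ⟨rr, hrr⟩).analyticAt
    · apply AnalyticAt.congr (g := dslope f a)
        (f := fun w => (w - a)⁻¹ * (f w - f a))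
      · exact (((analyticAt_id).sub analyticAt_const).inv
          (sub_ne_zero.2 h)).mul ((hf z hz).sub analyticAt_const)
      · filter_upwards [dslope_eventuallyEq_slope_of_ne f h] with w hw
        rw [hw, slope_def_field]
        field_simp
  · intro z
    have := sub_smul_dslope f a z
    rw [ha, sub_zero] at this
    rw [← this, smul_eq_mul]

lemma aux_factor (U : Set ℂ) (s : Finset ℂ) :
    ∀ (f : ℂ → ℂ), AnalyticOnNhd ℂ f U → (∀ a ∈ s, a ∈ U ∧ f a = 0) →
    ∃ g, AnalyticOnNhd ℂ g U ∧ ∀ z, f z = (∏ a ∈ s, (z - a)) * g z := by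
  induction s using Finset.induction with
  | empty => intro f hf _; exact ⟨f, hf, fun z => by simp⟩
  | insert a s ha ih =>
    intro f hf hs
    obtain ⟨haU, hfa⟩ := hs a (Finset.mem_insert_self a s)
    obtain ⟨hg1, hg2⟩ := aux_dslope f U hf a haU hfa
    obtain ⟨g, hg, hfac⟩ := ih (dslope f a) hg1 (fun b hb => by
      obtain ⟨hbU, hfb⟩ := hs b (Finset.mem_insert_of_mem hb)
      refine ⟨hbU, ?_⟩
      have hba : b ≠ a := fun h => ha (h ▸ hb)
      have := hg2 b
      rw [hfb] at this
      rcases mul_eq_zero.1 this.symm with h | h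
      · exact absurd (sub_eq_zero.1 h) hba
      · exact h)
    refine ⟨g, hg, fun z => ?_⟩
    rw [hg2 z, hfac z, Finset.prod_insert ha]
    ring

/-- Consequence of Jensen's formula: if `f` is analytic on a neighbourhood of the
closed ball of radius `r` about `z₀` and `f(z₀) ≠ 0`, then the number of zeros of `f`
in the closed ball of radius `r/2` about `z₀` is at most
`(1/log 2) · log( sup_{|z-z₀|=r} |f(z)| / |f(z₀)| )`. -/
theorem jensen_zero_count
    (z₀ : ℂ) (r : ℝ) (hr : 0 < r) (f : ℂ → ℂ) (U : Set ℂ) (hU : IsOpen U)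
    (hsub : Metric.closedBall z₀ r ⊆ U) (hf : AnalyticOnNhd ℂ f U) (hf0 : f z₀ ≠ 0) :
    {z : ℂ | z ∈ Metric.closedBall z₀ (r / 2) ∧ f z = 0}.Finite ∧
    ({z : ℂ | z ∈ Metric.closedBall z₀ (r / 2) ∧ f z = 0}.ncard : ℝ) ≤
      (1 / Real.log 2) *
        Real.log (sSup ((fun z => ‖f z‖) '' Metric.sphere z₀ r) /
          ‖f z₀‖) := by
  set S := {z : ℂ | z ∈ Metric.closedBall z₀ (r / 2) ∧ f z = 0} with hS
  have hhalf : Metric.closedBall z₀ (r / 2) ⊆ Metric.ball z₀ r := by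
    apply Metric.closedBall_subset_ball; linarith
  have hball_sub : Metric.ball z₀ r ⊆ U :=
    (Metric.ball_subset_closedBall).trans hsub
  have hfin : S.Finite := by
    by_contra hinf
    rw [← Set.not_infinite, not_not] at hinf
    obtain ⟨x, hxK, hx⟩ := hinf.exists_accPt_of_subset_isCompact
      (isCompact_closedBall z₀ (r / 2)) (fun z hz => hz.1)
    have hfreq : ∃ᶠ z in nhdsWithin x {x}ᶜ, f z = 0 := by
      have := hx
      rw [AccPt] at this
      have h2 : ∃ᶠ z in nhdsWithin x {x}ᶜ, z ∈ S :=
        Filter.frequently_mem_iff_neBot.2 this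
      exact h2.mono (fun z hz => hz.2)
    have heq : Set.EqOn f 0 (Metric.ball z₀ r) :=
      (hf.mono hball_sub).eqOn_zero_of_preconnected_of_frequently_eq_zero
        (convex_ball z₀ r).isPreconnected (hhalf hxK) hfreq
    exact hf0 (heq (Metric.mem_ball_self hr))
  refine ⟨hfin, ?_⟩
  set M := sSup ((fun z => ‖f z‖) '' Metric.sphere z₀ r) with hM
  set s := hfin.toFinset with hsdef
  have hcard : S.ncard = s.card := Set.ncard_eq_toFinset_card S hfin
  set n := s.card with hn
  have hsS : ∀ a ∈ s, a ∈ Metric.closedBall z₀ (r / 2) ∧ f a = 0 := by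
    intro a ha
    rw [hsdef, Set.Finite.mem_toFinset] at ha
    exact ha
  obtain ⟨g, hg, hfac⟩ := aux_factor U s f hf (fun a ha =>
    ⟨hsub ((Metric.closedBall_subset_closedBall (by linarith)) (hsS a ha).1),
      (hsS a ha).2⟩)
  set P : ℂ → ℂ := fun z => ∏ a ∈ s, ((r : ℂ) ^ 2 - (starRingEnd ℂ) (a - z₀) * (z - z₀))
    with hP
  set h : ℂ → ℂ := fun z => g z * P z with hh
  have hPanal : AnalyticOnNhd ℂ P U := by
    apply Finset.analyticOnNhd_fun_prod
    intro a _ z hz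
    exact analyticAt_const.sub (analyticAt_const.mul (analyticAt_id.sub analyticAt_const))
  have hhanal : AnalyticOnNhd ℂ h U := hg.mul hPanal
  -- M bounds |f| on sphere
  have hbdd : BddAbove ((fun z => ‖f z‖) '' Metric.sphere z₀ r) :=
    (isCompact_sphere z₀ r).bddAbove_image (by
      have : ContinuousOn f (Metric.sphere z₀ r) :=
        (hf.continuousOn).mono ((Metric.sphere_subset_closedBall).trans hsub)
      exact continuous_norm.comp_continuousOn this)
  have hMle : ∀ z ∈ Metric.sphere z₀ r, ‖f z‖ ≤ M :=
    fun z hz => le_csSup hbdd ⟨z, hz, rfl⟩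
  -- key identity on the sphere
  have hkey : ∀ z ∈ Metric.sphere z₀ r, ∀ a : ℂ,
      ‖(r : ℂ) ^ 2 - (starRingEnd ℂ) (a - z₀) * (z - z₀)‖
        = r * ‖z - a‖ := by
    intro z hz a
    have hzr : ‖z - z₀‖ = r := by
      rw [Metric.mem_sphere] at hz
      rw [← Complex.dist_eq] at *
      exact hz
    have hid : (r : ℂ) ^ 2 - (starRingEnd ℂ) (a - z₀) * (z - z₀)
        = (z - z₀) * (starRingEnd ℂ) ((z - z₀) - (a - z₀)) := by
      have hnormsq : (z - z₀) * (starRingEnd ℂ) (z - z₀) = ((r : ℂ)) ^ 2 := by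
        rw [Complex.mul_conj]
        norm_cast
        rw [Complex.normSq_eq_norm_sq, hzr]
      have hms : (starRingEnd ℂ) ((z - z₀) - (a - z₀))
          = (starRingEnd ℂ) (z - z₀) - (starRingEnd ℂ) (a - z₀) := map_sub _ _ _
      rw [hms]
      linear_combination -hnormsq
    rw [hid, norm_mul, Complex.norm_conj, hzr]
    congr 1
    ring_nf
  -- |h| = r^n * |f| on the sphere
  have hsphere : ∀ z ∈ Metric.sphere z₀ r, ‖h z‖ = r ^ n * ‖f z‖ := by
    intro z hz
    have : ‖P z‖ = r ^ n * ∏ a ∈ s, ‖z - a‖ := by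
      rw [hP]
      simp only
      rw [norm_prod]
      rw [Finset.prod_congr rfl (fun a _ => hkey z hz a), Finset.prod_mul_distrib]
      simp
      exact Or.inl rfl
    rw [hh]
    simp only
    rw [norm_mul, this, hfac z, norm_mul, norm_prod]
    ring
  -- max modulus
  have hmax : ‖h z₀‖ ≤ r ^ n * M := by
    have hdc : DiffContOnCl ℂ h (Metric.ball z₀ r) := by
      refine ⟨(hhanal.mono hball_sub).differentiableOn, ?_⟩
      rw [closure_ball z₀ hr.ne']
      exact (hhanal.continuousOn).mono hsub
    have := Complex.norm_le_of_forall_mem_frontier_norm_le (Metric.isBounded_ball)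
      hdc (C := r ^ n * M) (fun z hz => by
        rw [frontier_ball z₀ hr.ne'] at hz
        rw [hsphere z hz]
        exact mul_le_mul_of_nonneg_left (hMle z hz) (by positivity))
      (subset_closure (Metric.mem_ball_self hr))
    exact this
  have hhz₀ : ‖h z₀‖ = ‖g z₀‖ * (r ^ 2) ^ n := by
    rw [hh]
    simp only
    rw [norm_mul, hP]
    simp only [sub_self, mul_zero, sub_zero]
    rw [Finset.prod_const, norm_pow]
    congr 2
    rw [norm_pow]
    simp [Complex.norm_real, abs_of_pos hr]
  have hgz₀ : ‖g z₀‖ * r ^ (2 * n) ≤ r ^ n * M := by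
    rw [hhz₀] at hmax
    calc ‖g z₀‖ * r ^ (2 * n) = ‖g z₀‖ * (r ^ 2) ^ n := by
          rw [← pow_mul]
      _ ≤ r ^ n * M := hmax
  -- |f z₀| ≤ (r/2)^n |g z₀|
  have hfz₀ : ‖f z₀‖ ≤ (r / 2) ^ n * ‖g z₀‖ := by
    rw [hfac z₀, norm_mul, norm_prod]
    apply mul_le_mul_of_nonneg_right _ (norm_nonneg _)
    calc ∏ a ∈ s, ‖z₀ - a‖ ≤ ∏ a ∈ s, (r / 2) := by
          apply Finset.prod_le_prod (fun a _ => norm_nonneg _)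
          intro a ha
          have := (hsS a ha).1
          rw [Metric.mem_closedBall, dist_comm, Complex.dist_eq] at this
          exact this
      _ = (r / 2) ^ n := by rw [Finset.prod_const]
  -- combine: 2^n * |f z₀| ≤ M
  have hfpos : 0 < ‖f z₀‖ := norm_pos_iff.2 hf0
  have hcomb : (2 : ℝ) ^ n * ‖f z₀‖ ≤ M := by
    have h1 : (2 : ℝ) ^ n * ‖f z₀‖ ≤ 2 ^ n * ((r / 2) ^ n * ‖g z₀‖) :=
      mul_le_mul_of_nonneg_left hfz₀ (by positivity)
    have h2 : (2 : ℝ) ^ n * ((r / 2) ^ n * ‖g z₀‖) = r ^ n * ‖g z₀‖ := by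
      rw [div_pow, ← mul_assoc, mul_div_cancel₀]
      positivity
    have h3 : r ^ n * ‖g z₀‖ ≤ M := by
      have hrn : (0 : ℝ) < r ^ n := by positivity
      have h4 : (r ^ n * ‖g z₀‖) * r ^ n ≤ M * r ^ n := by
        calc (r ^ n * ‖g z₀‖) * r ^ n
            = ‖g z₀‖ * r ^ (2 * n) := by rw [two_mul, pow_add]; ring
          _ ≤ r ^ n * M := hgz₀
          _ = M * r ^ n := mul_comm _ _
      exact le_of_mul_le_mul_right h4 hrn
    linarith
  -- take logs
  have hMpos : 0 < M := lt_of_lt_of_le (by positivity) hcomb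
  have hratio : (2 : ℝ) ^ n ≤ M / ‖f z₀‖ := by
    rw [le_div_iff₀ hfpos]
    exact hcomb
  have hlog : (n : ℝ) * Real.log 2 ≤ Real.log (M / ‖f z₀‖) := by
    have := Real.log_le_log (by positivity) hratio
    rwa [Real.log_pow] at this
  rw [hcard]
  rw [one_div_mul_eq_div]
  rw [le_div_iff₀ (Real.log_pos one_lt_two)]
  exact hlog
end

section
/- Let r > 0, α, β ∈ (0,1), and 0 < η ≤ Y. Let w ∈ ℂ satisfy η ≤ Im w ≤ Y, |w| ≤ αr, and w ≠ iβr. Define b(z) := (z − conj(w))/(z − w) and Λ(r) := (1 + 4βη/((α+β)²r)) / (1 + 4Y/((1−α)²r)). Then: (i) |b(x)| = 1 for every real x; and (ii) for every z ∈ ℂ with |z| = r and Im z ≥ 0, one has |b(iβr)| ≥ Λ(r)^{1/2} · |b(z)|. -/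
open Complex

lemma bsq_formula (w z : ℂ) (h : z ≠ w) :
    (‖(z - starRingEnd ℂ w) / (z - w)‖)^2
      = 1 + 4 * z.im * w.im / Complex.normSq (z - w) := by
  have hzw : z - w ≠ 0 := sub_ne_zero.mpr h
  have hns : Complex.normSq (z - w) ≠ 0 := ne_of_gt (Complex.normSq_pos.mpr hzw)
  rw [norm_div, div_pow, Complex.sq_norm, Complex.sq_norm]
  have hkey : Complex.normSq (z - starRingEnd ℂ w)
      = Complex.normSq (z - w) + 4 * z.im * w.im := by
    simp [Complex.normSq_apply, Complex.sub_re, Complex.sub_im]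
    ring
  rw [hkey]
  field_simp

/-- Blaschke factor estimates used in Proposition 3.8: for `b(z) = (z - w̄)/(z - w)`
with `η ≤ Im w ≤ Y`, `|w| ≤ αr`, `w ≠ iβr`, one has (i) `|b(x)| = 1` for real `x`, and
(ii) `|b(iβr)| ≥ Λ(r)^{1/2} |b(z)|` for all `z` with `|z| = r`, `Im z ≥ 0`, where
`Λ(r) = (1 + 4βη/((α+β)²r)) / (1 + 4Y/((1-α)²r))`. -/
theorem blaschke_factor_estimates
    (r α β η Y : ℝ) (hr : 0 < r)
    (hα : α ∈ Set.Ioo (0:ℝ) 1) (hβ : β ∈ Set.Ioo (0:ℝ) 1)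
    (hη : 0 < η) (hηY : η ≤ Y)
    (w : ℂ) (hw1 : η ≤ w.im) (hw2 : w.im ≤ Y) (hw3 : ‖w‖ ≤ α * r)
    (hw4 : w ≠ Complex.I * β * r) :
    (∀ x : ℝ, ‖(((x : ℂ) - starRingEnd ℂ w) / ((x : ℂ) - w))‖ = 1) ∧
    (∀ z : ℂ, ‖z‖ = r → 0 ≤ z.im →
      Real.sqrt ((1 + 4 * β * η / ((α + β) ^ 2 * r)) / (1 + 4 * Y / ((1 - α) ^ 2 * r))) *
          ‖((z - starRingEnd ℂ w) / (z - w))‖ ≤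
        ‖((Complex.I * β * r - starRingEnd ℂ w) / (Complex.I * β * r - w))‖) := by
  obtain ⟨hα0, hα1⟩ := hα
  obtain ⟨hβ0, hβ1⟩ := hβ
  have ht : 0 < w.im := lt_of_lt_of_le hη hw1
  constructor
  · intro x
    have hx : (x:ℂ) - w ≠ 0 := by
      intro h
      have h2 : ((x:ℂ) - w).im = 0 := by rw [h]; simp
      simp [Complex.sub_im] at h2
      linarith
    have h1 : ((x:ℂ) - starRingEnd ℂ w) = starRingEnd ℂ ((x:ℂ) - w) := by
      simp [map_sub]
    rw [norm_div, h1, Complex.norm_conj, div_self (norm_ne_zero_iff.mpr hx)]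
  · intro z hz hzim
    set u : ℂ := Complex.I * β * r with hu
    have huim : u.im = β * r := by simp [hu]
    have huabs : ‖u‖ = β * r := by
      simp [hu, norm_mul, Complex.norm_I, Complex.norm_real,
        abs_of_pos hβ0, abs_of_pos hr]
    -- z ≠ w
    have hαr : α * r < r := by nlinarith
    have hzw : z ≠ w := by
      intro h; rw [h] at hz; linarith [hw3, hz.symm.le, hαr]
    have huw : u ≠ w := fun h => hw4 h.symm
    -- lower bound for |z - w|
    have hzwlow : (1 - α) * r ≤ ‖z - w‖ := by
      have := norm_sub_norm_le z w
      linarith [hw3, hz]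
    have hzwlow' : ((1 - α) * r)^2 ≤ Complex.normSq (z - w) := by
      rw [← Complex.sq_norm]
      exact pow_le_pow_left₀ (by nlinarith) hzwlow 2
    -- upper bound for |u - w|
    have huwup : ‖u - w‖ ≤ (α + β) * r := by
      have h1 : ‖u - w‖ ≤ ‖u‖ + ‖w‖ := by
        simpa [sub_eq_add_neg] using norm_add_le u (-w)
      rw [huabs] at h1; linarith
    have huwup' : Complex.normSq (u - w) ≤ ((α + β) * r)^2 := by
      rw [← Complex.sq_norm]
      exact pow_le_pow_left₀ (norm_nonneg _) huwup 2
    have huwpos : 0 < Complex.normSq (u - w) :=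
      Complex.normSq_pos.mpr (sub_ne_zero.mpr huw)
    have hzim_le : z.im ≤ r := by
      have := Complex.im_le_norm z; rwa [hz] at this
    -- abbreviations
    set N : ℝ := 1 + 4 * β * η / ((α + β) ^ 2 * r) with hN
    set M : ℝ := 1 + 4 * Y / ((1 - α) ^ 2 * r) with hM
    clear_value N M
    have hY : 0 < Y := lt_of_lt_of_le hη hηY
    have h1α : (0:ℝ) < 1 - α := by linarith
    have hMpos : 0 < M := by
      have h : 0 ≤ 4 * Y / ((1 - α) ^ 2 * r) := by positivity
      linarith
    have hNpos : 0 < N := by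
      have h : 0 ≤ 4 * β * η / ((α + β) ^ 2 * r) := by positivity
      linarith
    set B1 : ℝ := ‖(u - starRingEnd ℂ w) / (u - w)‖ with hB1def
    set B2 : ℝ := ‖(z - starRingEnd ℂ w) / (z - w)‖ with hB2def
    clear_value B1 B2
    have hB1sq : B1^2 = 1 + 4 * (β * r) * w.im / Complex.normSq (u - w) := by
      rw [hB1def, bsq_formula w u (fun h => hw4 h.symm), huim]
    have hB2sq : B2^2 = 1 + 4 * z.im * w.im / Complex.normSq (z - w) := by
      rw [hB2def, bsq_formula w z hzw]
    -- N ≤ B1^2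
    have hNle : N ≤ B1^2 := by
      rw [hB1sq, hN]
      have step : 4 * (β * r) * η / (((α + β) * r)^2) ≤
          4 * (β * r) * w.im / Complex.normSq (u - w) :=
        div_le_div₀ (by positivity)
          (mul_le_mul_of_nonneg_left hw1 (by positivity)) huwpos huwup'
      have heq : 4 * (β * r) * η / (((α + β) * r)^2)
          = 4 * β * η / ((α + β) ^ 2 * r) := by
        field_simp
      linarith [heq ▸ step]
    -- B2^2 ≤ M
    have hMge : B2^2 ≤ M := by
      rw [hB2sq, hM]
      have hd2pos : (0:ℝ) < ((1 - α) * r)^2 := by positivity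
      have hprod : z.im * w.im ≤ r * Y := mul_le_mul hzim_le hw2 ht.le hr.le
      have hnum0 : (0:ℝ) ≤ 4 * z.im * w.im := by
        have := mul_nonneg hzim ht.le
        linarith
      have step : 4 * z.im * w.im / Complex.normSq (z - w) ≤
          4 * r * Y / (((1 - α) * r)^2) :=
        div_le_div₀ (by positivity) (by linarith) hd2pos hzwlow'
      have heq : 4 * r * Y / (((1 - α) * r)^2) = 4 * Y / ((1 - α) ^ 2 * r) := by
        field_simp
      linarith [heq ▸ step]
    -- main squared inequality
    have hmain : (N / M) * B2^2 ≤ B1^2 := by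
      have h1 : (N / M) * B2^2 ≤ (N / M) * M :=
        mul_le_mul_of_nonneg_left hMge (by positivity)
      rw [div_mul_cancel₀ _ (ne_of_gt hMpos)] at h1
      linarith
    -- conclude via square roots
    have hB2nn : 0 ≤ B2 := hB2def ▸ norm_nonneg _
    have hB1nn : 0 ≤ B1 := hB1def ▸ norm_nonneg _
    calc Real.sqrt (N / M) * B2
        = Real.sqrt (N / M) * Real.sqrt (B2^2) := by rw [Real.sqrt_sq hB2nn]
      _ = Real.sqrt ((N / M) * B2^2) := (Real.sqrt_mul (by positivity) _).symm
      _ ≤ Real.sqrt (B1^2) := Real.sqrt_le_sqrt hmain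
      _ = B1 := Real.sqrt_sq hB1nn
end

section
/- Let γ > 0 and R > 0, and let λ ∈ Γ_γ = {λ ∈ ℂ : Re λ > 0, 0 < Im λ < γ}. Define f_R^{(0)}(λ) := (√λ − √(λ − iγ)) e^{i√(λ − iγ) R} − (√λ + √(λ − iγ)) e^{−i√(λ − iγ) R}. Suppose that: (i) √|λ − iγ| · log|λ − iγ| ≥ 8γR (with √|λ − iγ| the nonnegative real square root of the modulus); (ii) |λ − iγ|^{1/4} ≥ 2|λ − iγ|^{√2/8}; and (iii) |λ − iγ| ≥ γ^{4/3}. Then |f_R^{(0)}(λ)| ≥ |λ − iγ|^{1/4} · e^{Im √(λ − iγ) · R}; in particular f_R^{(0)}(λ) ≠ 0. -/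
open Complex

set_option maxHeartbeats 1000000 in
/-- Lower bound for `f_R^{(0)}(λ) = (√λ - √(λ-iγ)) e^{i√(λ-iγ)R} - (√λ + √(λ-iγ)) e^{-i√(λ-iγ)R}`
for `λ ∈ Γ_γ` satisfying (i) `√|λ-iγ| log|λ-iγ| ≥ 8γR`, (ii) `|λ-iγ|^{1/4} ≥ 2|λ-iγ|^{√2/8}`,
(iii) `|λ-iγ| ≥ γ^{4/3}`: one has `|f_R^{(0)}(λ)| ≥ |λ-iγ|^{1/4} e^{Im√(λ-iγ)·R}`, and in
particular `f_R^{(0)}(λ) ≠ 0`. -/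
theorem fR0_lower_bound
    (γ R : ℝ) (hγ : 0 < γ) (hR : 0 < R) (lam : ℂ)
    (hlam : 0 < lam.re ∧ 0 < lam.im ∧ lam.im < γ)
    (w w' : ℂ) (hw : IsBranchSqrt lam w) (hw' : IsBranchSqrt (lam - Complex.I * γ) w')
    (h1 : 8 * γ * R ≤ Real.sqrt (‖lam - Complex.I * γ‖) *
      Real.log (‖lam - Complex.I * γ‖))
    (h2 : 2 * (‖lam - Complex.I * γ‖) ^ (Real.sqrt 2 / 8) ≤
      (‖lam - Complex.I * γ‖) ^ ((1:ℝ)/4))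
    (h3 : γ ^ ((4:ℝ)/3) ≤ ‖lam - Complex.I * γ‖) :
    (‖lam - Complex.I * γ‖) ^ ((1:ℝ)/4) * Real.exp (w'.im * R) ≤
      ‖(w - w') * Complex.exp (Complex.I * w' * R) -
        (w + w') * Complex.exp (-Complex.I * w' * R)‖ ∧
    (w - w') * Complex.exp (Complex.I * w' * R) -
        (w + w') * Complex.exp (-Complex.I * w' * R) ≠ 0 := by
  obtain ⟨hre, him, himγ⟩ := hlam
  obtain ⟨hw2, hwb⟩ := hw
  obtain ⟨hw'2, hw'b⟩ := hw'
  set μ : ℂ := lam - Complex.I * γ with hμdef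
  set m : ℝ := ‖μ‖ with hmdef
  have hμre : μ.re = lam.re := by
    simp [hμdef, Complex.sub_re, Complex.mul_re]
  have hμim : μ.im = lam.im - γ := by
    simp [hμdef, Complex.sub_im, Complex.mul_im]
  have hμre_pos : 0 < μ.re := by rw [hμre]; exact hre
  have hμim_neg : μ.im < 0 := by rw [hμim]; linarith
  have hμne : μ ≠ 0 := by
    intro h; rw [h] at hμre_pos; simp at hμre_pos
  have hm_pos : 0 < m := norm_pos_iff.mpr hμne
  -- facts about w
  have him_eq : 2 * w.re * w.im = lam.im := by
    have h := congrArg Complex.im hw2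
    simp [pow_two, Complex.mul_im] at h
    linear_combination h
  have hre_eq : w.re ^ 2 - w.im ^ 2 = lam.re := by
    have h := congrArg Complex.re hw2
    simp [pow_two, Complex.mul_re] at h
    linear_combination h
  have habs_eq : w.re ^ 2 + w.im ^ 2 = ‖lam‖ := by
    have h : (‖w‖) ^ 2 = ‖lam‖ := by rw [← norm_pow, hw2]
    rw [Complex.sq_norm, Complex.normSq_apply] at h
    linear_combination h
  have hwim : 0 < w.im := by
    rcases hwb with h | ⟨h0, _⟩
    · exact h
    · exfalso; rw [h0] at him_eq; simp at him_eq; linarith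
  have hwre : 0 < w.re := by
    by_contra hcon
    push_neg at hcon
    have : 2 * w.re * w.im ≤ 0 :=
      mul_nonpos_of_nonpos_of_nonneg (by linarith) hwim.le
    linarith
  -- facts about w'
  have him'_eq : 2 * w'.re * w'.im = μ.im := by
    have h := congrArg Complex.im hw'2
    simp [pow_two, Complex.mul_im] at h
    linear_combination h
  have hre'_eq : w'.re ^ 2 - w'.im ^ 2 = μ.re := by
    have h := congrArg Complex.re hw'2
    simp [pow_two, Complex.mul_re] at h
    linear_combination h
  have habs'_eq : w'.re ^ 2 + w'.im ^ 2 = m := by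
    have h : (‖w'‖) ^ 2 = m := by rw [← norm_pow, hw'2]
    rw [Complex.sq_norm, Complex.normSq_apply] at h
    linear_combination h
  have hw'im : 0 < w'.im := by
    rcases hw'b with h | ⟨h0, _⟩
    · exact h
    · exfalso; rw [h0] at him'_eq; simp at him'_eq; linarith
  have hw're : w'.re < 0 := by
    by_contra hcon
    push_neg at hcon
    have : 0 ≤ 2 * w'.re * w'.im := by positivity
    linarith
  -- √2 facts
  have hrt2 : Real.sqrt 2 * Real.sqrt 2 = 2 := Real.mul_self_sqrt (by norm_num)
  have hrt2nn : 0 ≤ Real.sqrt 2 := Real.sqrt_nonneg 2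
  have hrt2le : Real.sqrt 2 ≤ 3/2 := by
    have h92 : Real.sqrt (9/4) = 3/2 := by
      rw [show (9/4:ℝ) = (3/2)^2 by norm_num, Real.sqrt_sq (by norm_num : (0:ℝ) ≤ 3/2)]
    calc Real.sqrt 2 ≤ Real.sqrt (9/4) := Real.sqrt_le_sqrt (by norm_num)
      _ = 3/2 := h92
  have hrt2ge : 1 ≤ Real.sqrt 2 := by
    have := Real.sqrt_le_sqrt (show (1:ℝ) ≤ 2 by norm_num)
    rwa [Real.sqrt_one] at this
  -- size facts about m
  have hm1 : 1 < m := by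
    by_contra h
    push_neg at h
    have h48 : Real.sqrt 2 / 8 ≤ (1:ℝ)/4 := by linarith
    have hle := Real.rpow_le_rpow_of_exponent_ge hm_pos h h48
    have hp : 0 < m ^ (Real.sqrt 2 / 8) := Real.rpow_pos_of_pos hm_pos _
    linarith
  have h2' : (2:ℝ) ≤ m ^ ((1:ℝ)/4) := by
    have h1m : (1:ℝ) ≤ m ^ (Real.sqrt 2 / 8) := by
      have := Real.rpow_le_rpow (by norm_num : (0:ℝ) ≤ 1) hm1.le
        (by positivity : (0:ℝ) ≤ Real.sqrt 2 / 8)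
      rwa [Real.one_rpow] at this
    linarith
  have hq_pos : 0 < m ^ ((1:ℝ)/4) := Real.rpow_pos_of_pos hm_pos _
  set s : ℝ := Real.sqrt m with hsdef
  have hs_pos : 0 < s := Real.sqrt_pos.mpr hm_pos
  have hs_sq : s ^ 2 = m := Real.sq_sqrt hm_pos.le
  have hqq : m ^ ((1:ℝ)/4) * m ^ ((1:ℝ)/4) = s := by
    rw [← Real.rpow_add hm_pos, hsdef, Real.sqrt_eq_rpow]
    norm_num
  have hs4 : 4 ≤ s := by
    have h44 : (2:ℝ) * 2 ≤ m ^ ((1:ℝ)/4) * m ^ ((1:ℝ)/4) :=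
      mul_le_mul h2' h2' (by norm_num) (by linarith)
    linarith [hqq]
  have hm16 : 16 ≤ m := by
    have h44 : (4:ℝ) * 4 ≤ s * s := mul_le_mul hs4 hs4 (by norm_num) (by linarith)
    linarith [hs_sq, h44]
  have hγ34 : γ ≤ m ^ ((3:ℝ)/4) := by
    have ha := Real.rpow_le_rpow (Real.rpow_nonneg hγ.le _) h3
      (by norm_num : (0:ℝ) ≤ 3/4)
    rw [← Real.rpow_mul hγ.le] at ha
    norm_num at ha
    exact ha
  have hγm : γ ≤ m / 2 := by
    have hmul : m ^ ((3:ℝ)/4) * m ^ ((1:ℝ)/4) = m := by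
      rw [← Real.rpow_add hm_pos]; norm_num
    have h34p : 0 < m ^ ((3:ℝ)/4) := Real.rpow_pos_of_pos hm_pos _
    have hh := mul_le_mul_of_nonneg_left h2' h34p.le
    rw [hmul] at hh
    linarith
  have hlog_pos : 0 < Real.log m := Real.log_pos hm1
  -- t = sqrt(m/2)
  set t : ℝ := Real.sqrt (m/2) with htdef
  have ht_pos : 0 < t := Real.sqrt_pos.mpr (by linarith)
  have hts : t * Real.sqrt 2 = s := by
    rw [htdef, hsdef, ← Real.sqrt_mul (by linarith : (0:ℝ) ≤ m/2) 2]
    norm_num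
  have hteq : t = Real.sqrt 2 / 2 * s := by
    have h := congrArg (· * Real.sqrt 2) hts
    simp only [mul_assoc] at h
    rw [hrt2] at h
    linarith
  -- -w'.re ≥ t
  have hw're2 : t ≤ -w'.re := by
    have hsq : m / 2 ≤ w'.re ^ 2 := by linarith [hre'_eq, habs'_eq, hμre_pos]
    calc t ≤ Real.sqrt (w'.re ^ 2) := Real.sqrt_le_sqrt hsq
      _ = |w'.re| := Real.sqrt_sq_eq_abs _
      _ = -w'.re := abs_of_neg hw're
  -- w.re ≥ s/2
  have hlamabs : m - γ ≤ ‖lam‖ := by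
    have h := norm_add_le lam (-(Complex.I * γ))
    have he : lam + -(Complex.I * γ) = μ := by rw [hμdef]; ring
    rw [he] at h
    have hIγ : ‖-(Complex.I * γ)‖ = γ := by
      rw [norm_neg, norm_mul, Complex.norm_I, one_mul, Complex.norm_real,
        Real.norm_of_nonneg hγ.le]
    rw [hIγ] at h
    linarith
  have hwre2 : s / 2 ≤ w.re := by
    have hsq : m / 4 ≤ w.re ^ 2 := by linarith [hre_eq, habs_eq, hlamabs, hγm]
    have h4 : Real.sqrt 4 = 2 := by
      rw [show (4:ℝ) = 2 ^ 2 by norm_num, Real.sqrt_sq (by norm_num : (0:ℝ) ≤ 2)]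
    have hm4 : Real.sqrt (m/4) = s / 2 := by
      rw [hsdef, Real.sqrt_div hm_pos.le, h4]
    calc s / 2 = Real.sqrt (m/4) := hm4.symm
      _ ≤ Real.sqrt (w.re ^ 2) := Real.sqrt_le_sqrt hsq
      _ = w.re := Real.sqrt_sq hwre.le
  -- lower bound on |w - w'|
  have hC : (1 + Real.sqrt 2) / 2 * s ≤ ‖w - w'‖ := by
    calc (1 + Real.sqrt 2) / 2 * s = s / 2 + Real.sqrt 2 / 2 * s := by ring
      _ ≤ w.re + (-w'.re) := by
          have := hw're2; rw [hteq] at this; linarith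
      _ = (w - w').re := by rw [Complex.sub_re]; ring
      _ ≤ ‖w - w'‖ := Complex.re_le_norm _
  have hwwpos : 0 < ‖w - w'‖ := lt_of_lt_of_le (by positivity) hC
  -- product identity
  have hprod : ‖w + w'‖ * ‖w - w'‖ = γ := by
    rw [← norm_mul]
    have he : (w + w') * (w - w') = Complex.I * γ := by
      have h : (w + w') * (w - w') = w ^ 2 - w' ^ 2 := by ring
      rw [h, hw2, hw'2, hμdef]; ring
    rw [he, norm_mul, Complex.norm_I, one_mul, Complex.norm_real, Real.norm_of_nonneg hγ.le]
  -- upper bound on |w + w'|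
  have hD : ‖w + w'‖ ≤ Real.sqrt 2 * m ^ ((1:ℝ)/4) := by
    have hge : t ≤ ‖w - w'‖ := by
      rw [hteq]; linarith [hC, hs_pos]
    have h34 : m ^ ((3:ℝ)/4) = m ^ ((1:ℝ)/4) * s := by
      rw [hsdef, Real.sqrt_eq_rpow, ← Real.rpow_add hm_pos]
      norm_num
    have hkey : γ ≤ Real.sqrt 2 * m ^ ((1:ℝ)/4) * t := by
      calc γ ≤ m ^ ((3:ℝ)/4) := hγ34
        _ = m ^ ((1:ℝ)/4) * s := h34
        _ = m ^ ((1:ℝ)/4) * (t * Real.sqrt 2) := by rw [hts]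
        _ = Real.sqrt 2 * m ^ ((1:ℝ)/4) * t := by ring
    have hstep : ‖w + w'‖ * ‖w - w'‖ ≤
        (Real.sqrt 2 * m ^ ((1:ℝ)/4)) * ‖w - w'‖ := by
      calc ‖w + w'‖ * ‖w - w'‖ = γ := hprod
        _ ≤ Real.sqrt 2 * m ^ ((1:ℝ)/4) * t := hkey
        _ ≤ (Real.sqrt 2 * m ^ ((1:ℝ)/4)) * ‖w - w'‖ := by
            apply mul_le_mul_of_nonneg_left hge (by positivity)
    exact le_of_mul_le_mul_right hstep hwwpos
  -- bound on w'.im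
  have hw'imb : w'.im * (-w'.re) ≤ γ / 2 := by
    have h := him'_eq
    rw [hμim] at h
    linarith [him, h]
  set a : ℝ := w'.im * R with hadef
  have ha_pos : 0 < a := mul_pos hw'im hR
  have h2a : 2 * a ≤ Real.sqrt 2 / 8 * Real.log m := by
    have hstep : (2 * a) * t ≤ (Real.sqrt 2 / 8 * Real.log m) * t := by
      have e1 : (2 * a) * t ≤ 2 * (w'.im * (-w'.re)) * R := by
        have h := mul_le_mul_of_nonneg_left hw're2
          (by positivity : (0:ℝ) ≤ 2 * w'.im * R)
        rw [hadef]; linarith [h]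
      have e2 : 2 * (w'.im * (-w'.re)) * R ≤ γ * R := by
        have := mul_le_mul_of_nonneg_right hw'imb hR.le
        linarith [this]
      have e3 : γ * R ≤ s * Real.log m / 8 := by linarith [h1]
      have e4 : s * Real.log m / 8 = (Real.sqrt 2 / 8 * Real.log m) * t := by
        rw [← hts]; ring
      linarith
    exact le_of_mul_le_mul_right hstep ht_pos
  have hexp2a : Real.exp (2 * a) ≤ m ^ ((1:ℝ)/4) / 2 := by
    have h1' : Real.exp (2 * a) ≤ m ^ (Real.sqrt 2 / 8) := by
      rw [Real.rpow_def_of_pos hm_pos]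
      exact Real.exp_le_exp.mpr (by linarith)
    linarith [h2]
  have hkey2 : m ^ ((1:ℝ)/4) * Real.exp (2 * a) ≤ s / 2 := by
    calc m ^ ((1:ℝ)/4) * Real.exp (2 * a) ≤ m ^ ((1:ℝ)/4) * (m ^ ((1:ℝ)/4) / 2) :=
        mul_le_mul_of_nonneg_left hexp2a hq_pos.le
      _ = (m ^ ((1:ℝ)/4) * m ^ ((1:ℝ)/4)) / 2 := by ring
      _ = s / 2 := by rw [hqq]
  -- moduli of the exponentials
  have hE1 : ‖Complex.exp (Complex.I * w' * R)‖ = Real.exp (-a) := by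
    rw [Complex.norm_exp]
    congr 1
    rw [hadef]
    simp [Complex.mul_re, Complex.mul_im]
  have hE2 : ‖Complex.exp (-Complex.I * w' * R)‖ = Real.exp a := by
    rw [Complex.norm_exp]
    congr 1
    rw [hadef]
    simp [Complex.mul_re, Complex.mul_im]
  -- main estimate
  have hXpos : 0 < Real.exp a := Real.exp_pos a
  have hexa : Real.exp (-a) * Real.exp a = 1 := by rw [← Real.exp_add]; simp
  have hexaa : Real.exp a * Real.exp a = Real.exp (2 * a) := by
    rw [← Real.exp_add]; ring_nf
  have hmain : m ^ ((1:ℝ)/4) * Real.exp a ≤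
      ‖w - w'‖ * Real.exp (-a) - ‖w + w'‖ * Real.exp a := by
    have hgoal' : (m ^ ((1:ℝ)/4) * Real.exp a + ‖w + w'‖ * Real.exp a) *
        Real.exp a ≤ (‖w - w'‖ * Real.exp (-a)) * Real.exp a := by
      calc (m ^ ((1:ℝ)/4) * Real.exp a + ‖w + w'‖ * Real.exp a) *
            Real.exp a
          = (m ^ ((1:ℝ)/4) + ‖w + w'‖) * Real.exp (2 * a) := by
            rw [← hexaa]; ring
        _ ≤ ((1 + Real.sqrt 2) * m ^ ((1:ℝ)/4)) * Real.exp (2 * a) :=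
            mul_le_mul_of_nonneg_right (by linarith [hD]) (Real.exp_pos _).le
        _ = (1 + Real.sqrt 2) * (m ^ ((1:ℝ)/4) * Real.exp (2 * a)) := by ring
        _ ≤ (1 + Real.sqrt 2) * (s / 2) :=
            mul_le_mul_of_nonneg_left hkey2 (by linarith)
        _ = (1 + Real.sqrt 2) / 2 * s := by ring
        _ ≤ ‖w - w'‖ := hC
        _ = (‖w - w'‖ * Real.exp (-a)) * Real.exp a := by
            rw [mul_assoc, hexa, mul_one]
    linarith [le_of_mul_le_mul_right hgoal' hXpos]
  -- conclusion
  have htri := norm_sub_norm_le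
    ((w - w') * Complex.exp (Complex.I * w' * (R:ℂ)))
    ((w + w') * Complex.exp (-Complex.I * w' * (R:ℂ)))
  rw [norm_mul, norm_mul, hE1, hE2] at htri
  have habsf : m ^ ((1:ℝ)/4) * Real.exp a ≤
      ‖(w - w') * Complex.exp (Complex.I * w' * (R:ℂ)) -
        (w + w') * Complex.exp (-Complex.I * w' * (R:ℂ))‖ := by linarith
  refine ⟨habsf, ?_⟩
  intro h0
  rw [h0, norm_zero] at habsf
  have : (0:ℝ) < m ^ ((1:ℝ)/4) * Real.exp a := by positivity
  linarith
end
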